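/- Let n ≥ 3, let D_{2n} = ⟨r, x | r^n = x² = 1, x r x⁻¹ = r⁻¹⟩ be the dihedral group of order 2n, and let m be an integer with m ≡ 1 (mod p) for every prime p dividing n, and m ≡ 1 (mod 4) if 4 | n. Then the map sending r ↦ r^m, x ↦ x·r extends to an automorphism α of D_{2n}, and α has a cycle of length n on D_{2n} (namely, the coset x⟨r⟩ forms a single cycle), so λ(α) = 1/2. -/

import Mathlib

/-- The largest cycle length ("Λ-value") of a self-map of a set. -/
noncomputable def maxCycleLen {X : Type*} (f : X → X) : ℕ :=
  sSup (Set.range fun x => Function.minimalPeriod f x)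

open Finset


private def Sg (m : ℤ) (k : ℕ) : ℤ := ∑ j ∈ Finset.range k, m ^ j

private lemma Sg_zero (m : ℤ) : Sg m 0 = 0 := by simp [Sg]

private lemma Sg_succ (m : ℤ) (k : ℕ) : Sg m (k + 1) = m * Sg m k + 1 := by
  simp [Sg, geom_sum_succ]

private lemma Sg_succ' (m : ℤ) (k : ℕ) : Sg m (k + 1) = Sg m k + m ^ k := by
  simp [Sg, geom_sum_succ']; ring

private lemma Sg_one (m : ℤ) : Sg m 1 = 1 := by simp [Sg]

private lemma Sg_mul_sub (m : ℤ) (k : ℕ) : (m - 1) * Sg m k = m ^ k - 1 := by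
  rw [Sg, mul_comm]; exact geom_sum_mul m k

private lemma Sg_add (m : ℤ) (a b : ℕ) : Sg m (a + b) = Sg m a + m ^ a * Sg m b := by
  induction b with
  | zero => simp [Sg_zero]
  | succ b ih =>
    rw [← Nat.add_assoc, Sg_succ', ih, Sg_succ', pow_add]; ring

private lemma Sg_mul (m : ℤ) (a b : ℕ) : Sg m (a * b) = Sg m a * Sg (m ^ a) b := by
  induction b with
  | zero => simp [Sg_zero]
  | succ b ih =>
    rw [Nat.mul_succ, Sg_add, ih, Sg_succ', pow_mul]; ring

private lemma Sg_sub_dvd (m : ℤ) (k : ℕ) : (m - 1) ∣ Sg m k - k := by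
  have : Sg m k - (k : ℤ) = ∑ j ∈ Finset.range k, (m ^ j - 1) := by
    rw [Finset.sum_sub_distrib, Sg]; simp
  rw [this]
  exact Finset.dvd_sum fun j _ => ⟨Sg m j, (Sg_mul_sub m j).symm⟩

/-- Lemma A : mod p, Sg m k ≡ k. -/
private lemma lemA {p : ℕ} {m : ℤ} (hpm : (p : ℤ) ∣ m - 1) (k : ℕ) :
    (p : ℤ) ∣ Sg m k ↔ (p : ℤ) ∣ (k : ℤ) := by
  have h : (p : ℤ) ∣ Sg m k - k := hpm.trans (Sg_sub_dvd m k)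
  constructor
  · intro h'
    have := dvd_sub h' h
    simpa using this
  · intro h'
    have := dvd_add h h'
    simpa using this

/-- Lemma C : Sg M p ≡ p mod p². -/
private lemma lemC {p : ℕ} (hp : p.Prime) {M : ℤ} (hpM : (p : ℤ) ∣ M - 1)
    (h2 : p = 2 → (4 : ℤ) ∣ M - 1) : ((p : ℤ)) ^ 2 ∣ Sg M p - p := by
  rcases eq_or_ne p 2 with rfl | hodd
  · have h4 := h2 rfl
    have he : Sg M 2 - ((2:ℕ):ℤ) = M - 1 := by
      rw [show (2:ℕ) = 1 + 1 from rfl, Sg_succ', Sg_one]; push_cast; ring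
    rw [he, show ((2:ℕ):ℤ)^2 = 4 by norm_num]; exact h4
  · -- p odd
    have hoddp : Odd p := hp.odd_of_ne_two hodd
    set T : ℤ := ∑ j ∈ Finset.range p, (j : ℤ) with hT
    have hfact : Sg M p - p = (M - 1) * ∑ j ∈ Finset.range p, Sg M j := by
      rw [Finset.mul_sum]
      have : Sg M p - (p : ℤ) = ∑ j ∈ Finset.range p, (M ^ j - 1) := by
        rw [Finset.sum_sub_distrib, Sg]; simp
      rw [this]
      exact Finset.sum_congr rfl fun j _ => (Sg_mul_sub M j).symm
    have hsum : (M - 1) ∣ (∑ j ∈ Finset.range p, Sg M j) - T := by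
      rw [hT, ← Finset.sum_sub_distrib]
      exact Finset.dvd_sum fun j _ => Sg_sub_dvd M j
    have hpT : (p : ℤ) ∣ T := by
      have h1 : (∑ i ∈ Finset.range p, i) * 2 = p * (p - 1) := Finset.sum_range_id_mul_two p
      have h2' : p ∣ (∑ i ∈ Finset.range p, i) * 2 := ⟨p - 1, h1⟩
      have h3 : p ∣ (∑ i ∈ Finset.range p, i) := by
        rcases (hp.dvd_mul.mp h2') with h | h
        · exact h
        · exact absurd h (by
            intro hd
            rcases (Nat.prime_two.eq_one_or_self_of_dvd p hd) with h' | h'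
            · exact absurd h' (by have := hp.one_lt; omega)
            · exact hodd h')
      have : T = ((∑ i ∈ Finset.range p, i : ℕ) : ℤ) := by push_cast [hT]; rfl
      rw [this]
      exact_mod_cast h3
    obtain ⟨D, hD⟩ := hsum
    have key : Sg M p - (p : ℤ) = (M - 1) * T + (M - 1) ^ 2 * D := by
      rw [hfact]; linear_combination (M - 1) * hD
    rw [key]
    refine dvd_add ?_ (Dvd.dvd.mul_right (pow_dvd_pow_of_dvd hpM 2) D)
    rw [sq]; exact mul_dvd_mul hpM hpT

/-- Lemma E : exact p-adic valuation of Sg m (p^e). -/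
private lemma lemE {p : ℕ} (hp : p.Prime) {m : ℤ} (hpm : (p : ℤ) ∣ m - 1)
    (h2 : p = 2 → (4 : ℤ) ∣ m - 1) :
    ∀ e : ℕ, ∃ u : ℤ, Sg m (p ^ e) = (p : ℤ) ^ e * u ∧ ¬ (p : ℤ) ∣ u := by
  have hpZ : Prime (p : ℤ) := Nat.prime_iff_prime_int.mp hp
  intro e
  induction e with
  | zero =>
    exact ⟨1, by simp [Sg_one], by simpa using hpZ.not_dvd_one⟩
  | succ e ih =>
    obtain ⟨u, hu, hpu⟩ := ih
    set M : ℤ := m ^ p ^ e with hM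
    have hmM : (m - 1) ∣ M - 1 := ⟨Sg m (p ^ e), by rw [← Sg_mul_sub]⟩
    have hpM : (p : ℤ) ∣ M - 1 := hpm.trans hmM
    have h2M : p = 2 → (4 : ℤ) ∣ M - 1 := fun h => (h2 h).trans hmM
    obtain ⟨c, hc⟩ := lemC hp hpM h2M
    have hSMp : Sg M p = (p : ℤ) * (1 + (p : ℤ) * c) := by linarith [hc]
    have hfac : Sg m (p ^ (e + 1)) = Sg m (p ^ e) * Sg M p := by
      rw [pow_succ, Sg_mul]
    refine ⟨u * (1 + (p : ℤ) * c), ?_, ?_⟩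
    · rw [hfac, hu, hSMp, pow_succ]; ring
    · intro hdvd
      rcases hpZ.dvd_mul.mp hdvd with h | h
      · exact hpu h
      · have : (p : ℤ) ∣ 1 := by
          have := dvd_sub h (Dvd.intro c rfl)
          simpa using this
        exact hpZ.not_dvd_one this

/-- Prime power full-period lemma. -/
private lemma lemPP {p : ℕ} (hp : p.Prime) {m : ℤ} (hpm : (p : ℤ) ∣ m - 1)
    (h2 : p = 2 → (4 : ℤ) ∣ m - 1) :
    ∀ e k : ℕ, (p : ℤ) ^ e ∣ Sg m k ↔ p ^ e ∣ k := by
  have hpZ : Prime (p : ℤ) := Nat.prime_iff_prime_int.mp hp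
  intro e
  induction e with
  | zero => simp
  | succ e ih =>
    intro k
    constructor
    · intro h
      have h' : (p : ℤ) ^ e ∣ Sg m k := (pow_dvd_pow _ (Nat.le_succ e)).trans h
      obtain ⟨a, rfl⟩ := (ih k).mp h'
      obtain ⟨u, hu, hpu⟩ := lemE hp hpm h2 e
      rw [Sg_mul, hu] at h
      have hcancel : (p : ℤ) ∣ u * Sg (m ^ p ^ e) a := by
        rw [pow_succ, mul_assoc] at h
        exact (mul_dvd_mul_iff_left (pow_ne_zero e (by exact_mod_cast hp.ne_zero))).mp h
      have hSa : (p : ℤ) ∣ Sg (m ^ p ^ e) a := by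
        rcases hpZ.dvd_mul.mp hcancel with h'' | h''
        · exact absurd h'' hpu
        · exact h''
      have hMm : (p : ℤ) ∣ m ^ p ^ e - 1 :=
        hpm.trans ⟨Sg m (p ^ e), by rw [← Sg_mul_sub]⟩
      have hpa : (p : ℤ) ∣ (a : ℤ) := (lemA hMm a).mp hSa
      have : p ∣ a := by exact_mod_cast hpa
      rw [pow_succ]
      exact mul_dvd_mul dvd_rfl this
    · rintro ⟨b, rfl⟩
      rw [Sg_mul]
      obtain ⟨u, hu, _⟩ := lemE hp hpm h2 (e + 1)
      rw [hu]
      exact (dvd_mul_right _ u).mul_right _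

/-- Key divisibility lemma (full period mod n). -/
private lemma keyDvd (n : ℕ) (m : ℤ)
    (hm : ∀ p : ℕ, p.Prime → p ∣ n → (p : ℤ) ∣ (m - 1))
    (hm4 : 4 ∣ n → (4 : ℤ) ∣ (m - 1)) :
    ∀ k : ℕ, (n : ℤ) ∣ Sg m k ↔ n ∣ k := by
  revert hm hm4
  induction n using Nat.recOnPosPrimePosCoprime with
  | prime_pow p e hp' he =>
    intro hm hm4
    have hpp : p.Prime := hp'
    have hpm : (p : ℤ) ∣ m - 1 := hm p hpp (dvd_pow_self p he.ne')
    by_cases hc : p = 2 → (4 : ℤ) ∣ m - 1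
    · intro k
      have := lemPP hpp hpm hc e k
      rw [← this]; push_cast; rfl
    · push_neg at hc
      obtain ⟨hp2, h4'⟩ := hc
      subst hp2
      have he1 : e = 1 := by
        by_contra hne
        have h2e : 2 ≤ e := by omega
        have : (4 : ℕ) ∣ 2 ^ e := by
          have : (4 : ℕ) = 2 ^ 2 := by norm_num
          rw [this]; exact pow_dvd_pow 2 h2e
        exact h4' (hm4 this)
      subst he1
      intro k
      rw [pow_one]
      have := lemA hpm k
      rw [show ((2:ℕ):ℤ) = (2:ℤ) from rfl] at this ⊢
      rw [this]
      exact_mod_cast Iff.rfl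
  | zero =>
    intro hm _
    have hm1 : m = 1 := by
      by_contra hne
      have h0 : m - 1 ≠ 0 := sub_ne_zero.mpr hne
      obtain ⟨p, hlt, hp⟩ := Nat.exists_infinite_primes ((m - 1).natAbs + 1)
      have hd : (p : ℤ) ∣ m - 1 := hm p hp (dvd_zero p)
      have hd' : p ∣ (m - 1).natAbs := by
        rwa [Int.natCast_dvd] at hd
      have := Nat.le_of_dvd (Int.natAbs_pos.mpr h0) hd'
      omega
    subst hm1
    intro k
    simp [Sg]
  | one => intro _ _ k; simp
  | coprime a b ha hb hab iha ihb =>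
    intro hm hm4
    have Ha := iha (fun p hp hd => hm p hp (hd.mul_right b))
      (fun h4 => hm4 (h4.mul_right b))
    have Hb := ihb (fun p hp hd => hm p hp (hd.mul_left a))
      (fun h4 => hm4 (h4.mul_left a))
    intro k
    have hcastab : ((a * b : ℕ) : ℤ) = (a : ℤ) * b := by push_cast; ring
    constructor
    · intro h
      have hA : (a : ℤ) ∣ Sg m k := dvd_trans (by exact_mod_cast dvd_mul_right a b) h
      have hB : (b : ℤ) ∣ Sg m k := dvd_trans (by exact_mod_cast dvd_mul_left b a) h
      exact Nat.Coprime.mul_dvd_of_dvd_of_dvd hab ((Ha k).mp hA) ((Hb k).mp hB)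
    · intro h
      have hco : IsCoprime (a : ℤ) (b : ℤ) := Nat.isCoprime_iff_coprime.mpr hab
      have := hco.mul_dvd ((Ha k).mpr ((dvd_mul_right a b).trans h))
        ((Hb k).mpr ((dvd_mul_left b a).trans h))
      rwa [hcastab]


/-- For `n ≥ 3` and `m` with `m ≡ 1 (mod p)` for every prime `p ∣ n` and
`m ≡ 1 (mod 4)` if `4 ∣ n`, the map `r ↦ r^m`, `x ↦ x·r` extends to an
automorphism `α` of the dihedral group `D_{2n}` whose cycle containing `x` has
length `n` (so the coset `x⟨r⟩` is a single cycle), and `λ(α) = 1/2`. -/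
theorem stmt18 (n : ℕ) (hn : 3 ≤ n) (m : ℤ)
    (hm : ∀ p : ℕ, p.Prime → p ∣ n → (p : ℤ) ∣ (m - 1))
    (hm4 : 4 ∣ n → (4 : ℤ) ∣ (m - 1)) :
    ∃ α : MulAut (DihedralGroup n),
      (∀ i : ZMod n, α (DihedralGroup.r i) = DihedralGroup.r ((m : ZMod n) * i)) ∧
      α (DihedralGroup.sr 0) = DihedralGroup.sr 0 * DihedralGroup.r 1 ∧
      Function.minimalPeriod (α : DihedralGroup n → DihedralGroup n)
        (DihedralGroup.sr 0) = n ∧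
      (maxCycleLen (α : DihedralGroup n → DihedralGroup n) : ℚ) /
        Nat.card (DihedralGroup n) = 1 / 2 := by
  haveI : NeZero n := ⟨by omega⟩
  set M : ZMod n := ((m : ℤ) : ZMod n) with hMdef
  -- M is a unit
  obtain ⟨M', hM'⟩ : ∃ M' : ZMod n, M' * M = 1 := by
    have hco : IsCoprime m (n : ℤ) := by
      rw [Int.isCoprime_iff_gcd_eq_one]
      by_contra hg
      obtain ⟨p, hp, hpd⟩ := Nat.exists_prime_and_dvd hg
      have h1 : (p : ℤ) ∣ m := (Int.natCast_dvd_natCast.mpr hpd).trans (Int.gcd_dvd_left _ _)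
      have h2 : (p : ℤ) ∣ (n : ℤ) := (Int.natCast_dvd_natCast.mpr hpd).trans (Int.gcd_dvd_right _ _)
      have h3 : p ∣ n := by exact_mod_cast h2
      have h4 : (p : ℤ) ∣ m - 1 := hm p hp h3
      have : (p : ℤ) ∣ 1 := by
        have := dvd_sub h1 h4
        simpa using this
      have := Int.le_of_dvd one_pos this
      have := hp.one_lt
      omega
    obtain ⟨u, v, huv⟩ := hco
    refine ⟨((u : ℤ) : ZMod n), ?_⟩
    have : (((u * m + v * n : ℤ)) : ZMod n) = 1 := by rw [huv]; simp
    push_cast at this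
    simpa [ZMod.natCast_self] using this
  have hMM' : M * M' = 1 := by rw [mul_comm]; exact hM'
  -- the automorphism
  let f : DihedralGroup n → DihedralGroup n := fun x => match x with
    | .r i => .r (M * i)
    | .sr i => .sr (M * i + 1)
  let g : DihedralGroup n → DihedralGroup n := fun x => match x with
    | .r i => .r (M' * i)
    | .sr i => .sr (M' * (i - 1))
  let α : MulAut (DihedralGroup n) :=
    { toFun := f
      invFun := g
      left_inv := by
        rintro (i | i) <;> simp only [f, g]
        · rw [← mul_assoc, hM', one_mul]
        · rw [add_sub_cancel_right, ← mul_assoc, hM', one_mul]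
      right_inv := by
        rintro (i | i) <;> simp only [f, g]
        · rw [← mul_assoc, hMM', one_mul]
        · rw [← mul_assoc, hMM', one_mul, sub_add_cancel]
      map_mul' := by
        rintro (i | i) (j | j) <;>
          simp only [f, DihedralGroup.r_mul_r, DihedralGroup.r_mul_sr,
            DihedralGroup.sr_mul_r, DihedralGroup.sr_mul_sr] <;> congr 1 <;> ring }
  have hα_r : ∀ i : ZMod n, α (DihedralGroup.r i) = DihedralGroup.r (M * i) := fun i => rfl
  have hα_sr : ∀ i : ZMod n, α (DihedralGroup.sr i) = DihedralGroup.sr (M * i + 1) := fun i => rfl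
  -- iterates
  have hiter_r : ∀ (k : ℕ) (i : ZMod n),
      (⇑α)^[k] (DihedralGroup.r i) = DihedralGroup.r (((m ^ k : ℤ) : ZMod n) * i) := by
    intro k
    induction k with
    | zero => intro i; simp
    | succ k ih =>
      intro i
      rw [Function.iterate_succ_apply', ih, hα_r]
      congr 1
      push_cast
      ring
  have hiter_sr : ∀ (k : ℕ) (i : ZMod n),
      (⇑α)^[k] (DihedralGroup.sr i) =
        DihedralGroup.sr (((m ^ k : ℤ) : ZMod n) * i + ((Sg m k : ℤ) : ZMod n)) := by
    intro k
    induction k with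
    | zero => intro i; simp [Sg_zero]
    | succ k ih =>
      intro i
      rw [Function.iterate_succ_apply', ih, hα_sr]
      congr 1
      rw [Sg_succ]
      push_cast
      ring
  have hkey := keyDvd n m hm hm4
  have hSn : (n : ℤ) ∣ Sg m n := (hkey n).mpr dvd_rfl
  have hmn : ((m ^ n : ℤ) : ZMod n) = 1 := by
    have h1 : (n : ℤ) ∣ m ^ n - 1 := by
      have := hSn.mul_left (m - 1)
      rwa [Sg_mul_sub] at this
    have h2 : ((m ^ n - 1 : ℤ) : ZMod n) = 0 := (ZMod.intCast_zmod_eq_zero_iff_dvd _ n).mpr h1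
    push_cast at h2 ⊢
    linear_combination h2
  -- α^[n] = id
  have hper : ∀ x : DihedralGroup n, (⇑α)^[n] x = x := by
    rintro (i | i)
    · rw [hiter_r, hmn, one_mul]
    · rw [hiter_sr, hmn, one_mul]
      have : ((Sg m n : ℤ) : ZMod n) = 0 := (ZMod.intCast_zmod_eq_zero_iff_dvd _ n).mpr hSn
      rw [this, add_zero]
  -- minimal period at sr 0
  have hP : Function.IsPeriodicPt ⇑α n (DihedralGroup.sr 0) := hper _
  have hminp : Function.minimalPeriod ⇑α (DihedralGroup.sr 0) = n := by
    set t := Function.minimalPeriod ⇑α (DihedralGroup.sr 0) with ht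
    have hdvd : t ∣ n := hP.minimalPeriod_dvd
    have htper : (⇑α)^[t] (DihedralGroup.sr 0) = DihedralGroup.sr 0 :=
      Function.isPeriodicPt_minimalPeriod ⇑α _
    rw [hiter_sr] at htper
    simp only [mul_zero, zero_add, DihedralGroup.sr.injEq] at htper
    have : (n : ℤ) ∣ Sg m t := (ZMod.intCast_zmod_eq_zero_iff_dvd _ n).mp htper
    have hnt : n ∣ t := (hkey t).mp this
    exact Nat.dvd_antisymm hdvd hnt
  -- every period divides n
  have hub : ∀ x : DihedralGroup n, Function.minimalPeriod ⇑α x ≤ n := fun x =>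
    Nat.le_of_dvd (by omega) (Function.IsPeriodicPt.minimalPeriod_dvd (hper x))
  have hmax : maxCycleLen (⇑α) = n := by
    unfold maxCycleLen
    apply le_antisymm
    · exact csSup_le ⟨_, ⟨DihedralGroup.sr 0, rfl⟩⟩ (by rintro y ⟨x, rfl⟩; exact hub x)
    · exact le_csSup ⟨n, by rintro y ⟨x, rfl⟩; exact hub x⟩ ⟨DihedralGroup.sr 0, hminp⟩
  have hcard : Nat.card (DihedralGroup n) = 2 * n := by
    rw [Nat.card_eq_fintype_card, DihedralGroup.card]
  refine ⟨α, fun i => hα_r i, ?_, hminp, ?_⟩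
  · rw [hα_sr]
    simp
  · rw [hmax, hcard]
    have hn0 : (n : ℚ) ≠ 0 := by positivity
    push_cast
    field_simp
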